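/- Let D be an oriented graph on n vertices with δ^0(D) ≥ (1/2 - c)n where c < 1/4, and let S^+ be a vertex set with the property that every x ∈ S^+ satisfies d^+(x, A) ≤ γn for a fixed set A with |A| > (1/3 + 50k³δ)n, and |S^+| ≥ (n - |A|)/2 - 51k³δn where the complement of A has size at most (2/3 - 50k³δ)n. If additionally every vertex x ∈ S^+ has d^+(x, V(D)∖(A ∪ S^+)) ≤ n - |A| - |S^+| + 6k^{3/2}δn, then some vertex x ∈ S^+ with d^+(x, S^+) ≤ |S^+|/2 satisfies d^+(x) < (3/4)(2/3 - 50k³δ)n + γn + 32k³δn; in particular, if c, γ, δ are small enough that this bound is below (1/2 - c)n, no such configuration exists, i.e., |A| ≤ (1/3 + 50k³δ)n must hold. -/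
import Mathlib


/-- Out-degree of a vertex in a digraph given by the relation `G`. -/
noncomputable def outDeg {V : Type*} (G : V → V → Prop) (v : V) : ℕ :=
  Nat.card {w : V // G v w}

/-- In-degree of a vertex in a digraph given by the relation `G`. -/
noncomputable def inDeg {V : Type*} (G : V → V → Prop) (v : V) : ℕ :=
  Nat.card {w : V // G w v}

/-- `dOut G v W` is the number of out-neighbours of `v` lying in the set `W`. -/
noncomputable def dOut {V : Type*} (G : V → V → Prop) (v : V) (W : Set V) : ℕ :=
  Nat.card {w : V // w ∈ W ∧ G v w}

open Classical in
lemma dOut_eq' {V : Type*} [Fintype V] (G : V → V → Prop) (v : V) (W : Set V) :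
    dOut G v W = (Finset.univ.filter (fun w => w ∈ W ∧ G v w)).card := by
  rw [dOut, Nat.card_eq_fintype_card, Fintype.card_subtype]

open Classical in
lemma outDeg_eq' {V : Type*} [Fintype V] (G : V → V → Prop) (v : V) :
    outDeg G v = (Finset.univ.filter (fun w => G v w)).card := by
  rw [outDeg, Nat.card_eq_fintype_card, Fintype.card_subtype]

lemma partition_bound {V : Type*} [Fintype V] (G : V → V → Prop) (v : V) (A Sp : Set V) :
    outDeg G v ≤ dOut G v A + dOut G v Sp + dOut G v ((A ∪ Sp)ᶜ) := by
  classical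
  have hinj : Function.Injective (fun w : {w : V // G v w} =>
      if h : (w : V) ∈ A then
        (Sum.inl ⟨w, h, w.2⟩ :
          {u // u ∈ A ∧ G v u} ⊕ ({u // u ∈ Sp ∧ G v u} ⊕ {u // u ∈ (A ∪ Sp)ᶜ ∧ G v u}))
      else if h2 : (w : V) ∈ Sp then Sum.inr (Sum.inl ⟨w, h2, w.2⟩)
      else Sum.inr (Sum.inr ⟨w, by simp [h, h2], w.2⟩)) := by
    intro a b hab
    by_cases ha : (a:V) ∈ A <;> by_cases hb : (b:V) ∈ A <;>
      by_cases ha2 : (a:V) ∈ Sp <;> by_cases hb2 : (b:V) ∈ Sp <;>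
      simp_all [Subtype.ext_iff]
  have := Nat.card_le_card_of_injective _ hinj
  simpa [outDeg, dOut, Nat.card_sum, add_assoc] using this

open Classical in
lemma avg_lemma {V : Type*} [Fintype V] (G : V → V → Prop)
    (horiented : ∀ u v, G u v → ¬ G v u) (Sp : Set V) (hne : Sp.Nonempty) :
    ∃ x ∈ Sp, (dOut G x Sp : ℝ) ≤ (Sp.ncard : ℝ)/2 := by
  set s := Sp.toFinset with hs
  have hcard : Sp.ncard = s.card := Set.ncard_eq_toFinset_card' Sp
  have hdo : ∀ x, dOut G x Sp = (s.filter (fun w => G x w)).card := by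
    intro x
    rw [dOut_eq']
    congr 1
    ext w
    simp [hs]
  -- sum bound
  have key : ∑ x ∈ s, ((s.filter (fun w => G x w)).card : ℝ) ≤ (s.card : ℝ)^2 / 2 := by
    have h1 : ∀ x ∈ s, ((s.filter (fun w => G x w)).card : ℝ)
        = ∑ y ∈ s, (if G x y then (1:ℝ) else 0) := by
      intro x _
      rw [Finset.card_filter]
      push_cast
      rfl
    rw [Finset.sum_congr rfl h1]
    have h2 : ∑ x ∈ s, ∑ y ∈ s, (if G x y then (1:ℝ) else 0)
        = ∑ x ∈ s, ∑ y ∈ s, (if G y x then (1:ℝ) else 0) := Finset.sum_comm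
    have h3 : (∑ x ∈ s, ∑ y ∈ s, (if G x y then (1:ℝ) else 0))
        + (∑ x ∈ s, ∑ y ∈ s, (if G y x then (1:ℝ) else 0)) ≤ (s.card : ℝ)^2 := by
      rw [← Finset.sum_add_distrib]
      have : ∀ x ∈ s, (∑ y ∈ s, (if G x y then (1:ℝ) else 0))
          + (∑ y ∈ s, (if G y x then (1:ℝ) else 0)) ≤ (s.card : ℝ) := by
        intro x _
        rw [← Finset.sum_add_distrib]
        calc ∑ y ∈ s, ((if G x y then (1:ℝ) else 0) + (if G y x then (1:ℝ) else 0))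
            ≤ ∑ y ∈ s, (1:ℝ) := by
              apply Finset.sum_le_sum
              intro y _
              by_cases h : G x y
              · simp [h, horiented x y h]
              · by_cases h' : G y x <;> simp [h, h']
          _ = (s.card : ℝ) := by simp
      calc ∑ x ∈ s, ((∑ y ∈ s, (if G x y then (1:ℝ) else 0))
            + (∑ y ∈ s, (if G y x then (1:ℝ) else 0)))
          ≤ ∑ x ∈ s, (s.card : ℝ) := Finset.sum_le_sum this
        _ = (s.card : ℝ)^2 := by simp [sq]
    linarith [h2 ▸ h3]
  -- extract an element
  by_contra hcon
  push_neg at hcon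
  have hsne : s.Nonempty := by
    obtain ⟨x, hx⟩ := hne
    exact ⟨x, by simp [hs, hx]⟩
  have : (s.card : ℝ)^2 / 2 < ∑ x ∈ s, ((s.filter (fun w => G x w)).card : ℝ) := by
    have : ∀ x ∈ s, (s.card : ℝ)/2 < ((s.filter (fun w => G x w)).card : ℝ) := by
      intro x hx
      have := hcon x (by simpa [hs] using hx)
      rw [hdo] at this
      rw [hcard] at this
      linarith
    calc (s.card : ℝ)^2/2 = ∑ _x ∈ s, (s.card : ℝ)/2 := by
          rw [Finset.sum_const]; push_cast; ring
      _ < _ := Finset.sum_lt_sum_of_nonempty hsne this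
  linarith


lemma krpow_le {k : ℕ} : (k:ℝ)^((3:ℝ)/2) ≤ (k:ℝ)^3 := by
  rcases Nat.eq_zero_or_pos k with hk | hk
  · subst hk
    rw [Nat.cast_zero, Real.zero_rpow (by norm_num)]
    norm_num
  · have h1 : (1:ℝ) ≤ (k:ℝ) := by exact_mod_cast hk
    have : (k:ℝ)^((3:ℝ)/2) ≤ (k:ℝ)^(3:ℝ) :=
      Real.rpow_le_rpow_of_exponent_le h1 (by norm_num)
    rwa [show ((3:ℝ)) = ((3:ℕ):ℝ) by norm_num, Real.rpow_natCast] at this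

/-- Lemma 3.13(ii)-type statement: let `D` be an oriented graph on `n`
vertices with minimum semi-degree at least `(1/2 - c)n`, and let `S⁺` be a nonempty set
disjoint from `A` such that every `x ∈ S⁺` has `d⁺(x, A) ≤ γn`,
`|S⁺| ≥ (n - |A|)/2 - 51k³δn`, and every `x ∈ S⁺` has
`d⁺(x, V∖(A ∪ S⁺)) ≤ n - |A| - |S⁺| + 6k^{3/2}δn`.  If moreover
`(3/4)(2/3 - 50k³δ)n + γn + 32k³δn < (1/2 - c)n`, then such a configuration with
`|A| > (1/3 + 50k³δ)n` is impossible, i.e. `|A| ≤ (1/3 + 50k³δ)n` must hold. -/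
theorem stmt19 {V : Type*} [Fintype V] (G : V → V → Prop)
    (horiented : ∀ u v, G u v → ¬ G v u)
    (k n : ℕ) (c γ δ : ℝ) (hn : Fintype.card V = n)
    (hc : c < 1/4) (hγ : 0 ≤ γ) (hδ : 0 ≤ δ)
    (hdeg : ∀ v : V, ((1:ℝ)/2 - c) * n ≤ (outDeg G v : ℝ) ∧
                     ((1:ℝ)/2 - c) * n ≤ (inDeg G v : ℝ))
    (A Sp : Set V) (hdisj : Disjoint A Sp) (hne : Sp.Nonempty)
    (hAout : ∀ x ∈ Sp, (dOut G x A : ℝ) ≤ γ * n)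
    (hSsize : ((n : ℝ) - (A.ncard : ℝ))/2 - 51*(k:ℝ)^3*δ*n ≤ (Sp.ncard : ℝ))
    (hrest : ∀ x ∈ Sp, (dOut G x ((A ∪ Sp)ᶜ) : ℝ) ≤
      (n : ℝ) - (A.ncard : ℝ) - (Sp.ncard : ℝ) + 6*(k:ℝ)^((3:ℝ)/2)*δ*n)
    (hsmall : (3/4)*((2:ℝ)/3 - 50*(k:ℝ)^3*δ)*n + γ*n + 32*(k:ℝ)^3*δ*n < ((1:ℝ)/2 - c)*n) :
    (A.ncard : ℝ) ≤ ((1:ℝ)/3 + 50*(k:ℝ)^3*δ) * n := by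
  by_contra hA
  push_neg at hA
  obtain ⟨x, hx, hxS⟩ := avg_lemma G horiented Sp hne
  have hpart := partition_bound G x A Sp
  have hpart' : (outDeg G x : ℝ) ≤ (dOut G x A : ℝ) + (dOut G x Sp : ℝ)
      + (dOut G x ((A ∪ Sp)ᶜ) : ℝ) := by exact_mod_cast hpart
  have h1 := hAout x hx
  have h2 := hrest x hx
  have h3 := (hdeg x).1
  have hδn : 0 ≤ δ * (n:ℝ) := mul_nonneg hδ (Nat.cast_nonneg n)
  have hk3 : (0:ℝ) ≤ (k:ℝ)^3 := by positivity
  have h6 : 6*(k:ℝ)^((3:ℝ)/2)*δ*(n:ℝ) ≤ 6*(k:ℝ)^3*δ*(n:ℝ) := by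
    nlinarith [mul_le_mul_of_nonneg_right (krpow_le (k := k)) hδn]
  nlinarith [mul_nonneg hk3 hδn]
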